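/- arXiv:1303.4245 — 2 statements merged into one kernel-verified Lean document; each statement's English description precedes it below -/
import Mathlib

section
/- Let f : ℝ → ℝ be a 2π-periodic C² function and let q ≥ 1 be an integer. Define the lift G_{r,a} : ℝ → ℝ by G_{r,a}(x) = x + 2πr + a·f(x). Then there exist constants C > 0 and a₀ > 0 (depending only on q and ‖f‖_{C²}) such that for all a with |a| ≤ a₀, all r ∈ ℝ, and all x ∈ ℝ: |G_{r,a}^q(x) − x − 2πrq − a·∑_{k=0}^{q−1} f(x + 2πkr)| ≤ C·a². -/
open Real

noncomputable def circleLift (f : ℝ → ℝ) (r a : ℝ) : ℝ → ℝ := fun x => x + 2 * Real.pi * r + a * f x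

lemma periodic_bounded {g : ℝ → ℝ} (hper : Function.Periodic g (2 * Real.pi))
    (hg : Continuous g) : ∃ M, ∀ x, |g x| ≤ M := by
  obtain ⟨M, hM⟩ := (isCompact_Icc (a := (0:ℝ)) (b := 2 * Real.pi)).exists_bound_of_continuousOn
    hg.continuousOn
  refine ⟨M, fun x => ?_⟩
  obtain ⟨y, hy, hxy⟩ := hper.exists_mem_Ico₀ (by positivity) x
  rw [hxy]
  simpa using hM y ⟨hy.1, hy.2.le⟩

/-- First-order expansion of the `q`-th iterate of the lift `x ↦ x + 2πr + a f(x)` in the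
parameter `a`, with a uniform quadratic error term. -/
theorem iterate_first_order_expansion
    (f : ℝ → ℝ) (hper : Function.Periodic f (2 * Real.pi)) (hf : ContDiff ℝ 2 f)
    (q : ℕ) (hq : 1 ≤ q) :
    ∃ C > 0, ∃ a₀ > 0, ∀ a : ℝ, |a| ≤ a₀ → ∀ r x : ℝ,
      |(circleLift f r a)^[q] x - x - 2 * Real.pi * r * q
          - a * ∑ k ∈ Finset.range q, f (x + 2 * Real.pi * k * r)| ≤ C * a ^ 2 := by
  obtain ⟨M₁, hM₁⟩ := periodic_bounded hper hf.continuous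
  have hperd : Function.Periodic (deriv f) (2 * Real.pi) := by
    intro x
    have hfun : (fun y => f (y + 2 * Real.pi)) = f := funext hper
    calc deriv f (x + 2 * Real.pi) = deriv (fun y => f (y + 2 * Real.pi)) x :=
          (deriv_comp_add_const f _ x).symm
      _ = deriv f x := by rw [hfun]
  obtain ⟨M₂, hM₂⟩ := periodic_bounded hperd (hf.continuous_deriv (by norm_num))
  set M : ℝ := max 1 (max M₁ M₂) with hM
  have hM0 : (0:ℝ) < M := lt_of_lt_of_le one_pos (le_max_left _ _)
  have hMf : ∀ x, |f x| ≤ M := fun x =>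
    (hM₁ x).trans ((le_max_left _ _).trans (le_max_right _ _))
  have hMd : ∀ x, |deriv f x| ≤ M := fun x =>
    (hM₂ x).trans ((le_max_right _ _).trans (le_max_right _ _))
  have hdiff : Differentiable ℝ f := hf.differentiable (by norm_num)
  have hlip : ∀ u v : ℝ, |f u - f v| ≤ M * |u - v| := by
    intro u v
    have := Convex.norm_image_sub_le_of_norm_deriv_le (f := f) (C := M)
      (fun x _ => hdiff x)
      (fun x _ => by simpa [Real.norm_eq_abs] using hMd x)
      convex_univ (Set.mem_univ v) (Set.mem_univ u)
    simpa [Real.norm_eq_abs] using this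
  have key : ∀ n : ℕ, ∃ C > 0, ∀ a : ℝ, |a| ≤ 1 → ∀ r x : ℝ,
      |(circleLift f r a)^[n] x - x - 2 * Real.pi * r * n
          - a * ∑ k ∈ Finset.range n, f (x + 2 * Real.pi * k * r)| ≤ C * a ^ 2 := by
    intro n
    induction n with
    | zero =>
        exact ⟨1, one_pos, fun a _ r x => by simp [sq_nonneg a]⟩
    | succ n ih =>
        obtain ⟨C, hC, hCn⟩ := ih
        refine ⟨C + M * (C + n * M), by positivity, fun a ha r x => ?_⟩
        have hE := hCn a ha r x
        set y := (circleLift f r a)^[n] x with hy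
        set S := ∑ k ∈ Finset.range n, f (x + 2 * Real.pi * k * r) with hS
        have hstep : (circleLift f r a)^[n+1] x = y + 2 * Real.pi * r + a * f y := by
          rw [Function.iterate_succ_apply']; rfl
        have hsum : ∑ k ∈ Finset.range (n+1), f (x + 2 * Real.pi * k * r)
            = S + f (x + 2 * Real.pi * n * r) := Finset.sum_range_succ _ _
        have hSb : |S| ≤ n * M := by
          calc |S| ≤ ∑ k ∈ Finset.range n, |f (x + 2 * Real.pi * k * r)| :=
                Finset.abs_sum_le_sum_abs _ _
            _ ≤ ∑ _k ∈ Finset.range n, M := Finset.sum_le_sum fun k _ => hMf _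
            _ = n * M := by simp [mul_comm]
        have hdist : |y - (x + 2 * Real.pi * n * r)| ≤ C * a ^ 2 + |a| * (n * M) := by
          have h1 : |y - (x + 2 * Real.pi * n * r) - a * S| ≤ C * a ^ 2 := by
            have heq : y - (x + 2 * Real.pi * n * r) - a * S
                = y - x - 2 * Real.pi * r * n - a * S := by ring
            rw [heq]; exact hE
          have h2 : |a * S| ≤ |a| * (n * M) := by
            rw [abs_mul]; exact mul_le_mul_of_nonneg_left hSb (abs_nonneg a)
          calc |y - (x + 2 * Real.pi * n * r)|
              = |(y - (x + 2 * Real.pi * n * r) - a * S) + a * S| := by ring_nf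
            _ ≤ |y - (x + 2 * Real.pi * n * r) - a * S| + |a * S| := abs_add_le _ _
            _ ≤ C * a ^ 2 + |a| * (n * M) := add_le_add h1 h2
        have hfd : |f y - f (x + 2 * Real.pi * n * r)|
            ≤ M * (C * a ^ 2 + |a| * (n * M)) :=
          (hlip _ _).trans (mul_le_mul_of_nonneg_left hdist hM0.le)
        have hEsucc : (circleLift f r a)^[n+1] x - x - 2 * Real.pi * r * (n+1 : ℕ)
            - a * ∑ k ∈ Finset.range (n+1), f (x + 2 * Real.pi * k * r)
            = (y - x - 2 * Real.pi * r * n - a * S)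
              + a * (f y - f (x + 2 * Real.pi * n * r)) := by
          rw [hstep, hsum]; push_cast; ring
        rw [hEsucc]
        calc |(y - x - 2 * Real.pi * r * n - a * S)
              + a * (f y - f (x + 2 * Real.pi * n * r))|
            ≤ |y - x - 2 * Real.pi * r * n - a * S|
              + |a| * |f y - f (x + 2 * Real.pi * n * r)| := by
              rw [← abs_mul]; exact abs_add_le _ _
          _ ≤ C * a ^ 2 + |a| * (M * (C * a ^ 2 + |a| * (n * M))) :=
              add_le_add hE (mul_le_mul_of_nonneg_left hfd (abs_nonneg a))
          _ ≤ (C + M * (C + n * M)) * a ^ 2 := by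
              have hn : (0:ℝ) ≤ (n:ℝ) := Nat.cast_nonneg n
              have habs2 : |a| * |a| = a ^ 2 := by rw [← sq]; exact sq_abs a
              nlinarith [habs2, hn, sq_nonneg a, hM0.le, hC.le,
                mul_nonneg (mul_nonneg (mul_nonneg hM0.le hC.le) (sq_nonneg a))
                  (sub_nonneg.2 ha),
                mul_nonneg hn (mul_nonneg hM0.le hM0.le)]
  obtain ⟨C, hC, hkey⟩ := key q
  exact ⟨C, hC, 1, one_pos, fun a ha r x => hkey a ha r x⟩
end

section
/- For every integer n ≥ 1, every δ > 0, every y ∈ ℝ, and every real number s with |s| ≤ (cosh(nδ) + 1)/2, one has |cos(n(y + iδ)) − s| ≥ (cosh(nδ) − 1)/2. (In other words, the distance in ℂ between the ellipse {cos(n(y + iδ)) : y ∈ ℝ} and the real segment [−(cosh(nδ)+1)/2, (cosh(nδ)+1)/2] is at least (cosh(nδ) − 1)/2.) -/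
open Real

lemma cos_ellipse_alg (a b s C S : ℝ) (hab : a^2 + b^2 = 1) (hCS : C^2 - S^2 = 1)
    (hC : 1 ≤ C) (hs : s^2 ≤ ((C+1)/2)^2) :
    ((C-1)/2)^2 ≤ (a*C - s)^2 + (b*S)^2 := by
  have hb : b^2 = 1 - a^2 := by linarith
  have hS : S^2 = C^2 - 1 := by linarith
  have ha : a^2 ≤ 1 := by nlinarith [sq_nonneg b]
  have ha1 : a ≤ 1 := by nlinarith [sq_nonneg (a-1)]
  have ha2 : -1 ≤ a := by nlinarith [sq_nonneg (a+1)]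
  have key : ((C-1)/2)^2 ≤ (a*C - s)^2 + (1 - a^2)*(C^2 - 1) := by
    rcases le_or_gt (C*s) (-1) with h1 | h1
    · nlinarith [mul_nonneg (by linarith : (0:ℝ) ≤ a+1) (by linarith : (0:ℝ) ≤ a - 1 - 2*(C*s)), sq_nonneg (C+s), sq_nonneg (C-1)]
    · rcases le_or_gt 1 (C*s) with h2 | h2
      · nlinarith [mul_nonneg (by linarith : (0:ℝ) ≤ 1 - a) (by linarith : (0:ℝ) ≤ 2*(C*s) - (a+1)), sq_nonneg (C-s), sq_nonneg (C-1)]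
      · nlinarith [sq_nonneg (a - C*s), mul_nonneg (by nlinarith : (0:ℝ) ≤ C^2 - 1) (by nlinarith : (0:ℝ) ≤ 1 - C^2*s^2), sq_nonneg (C^2-1), sq_nonneg C, sq_nonneg (C-1), sq_nonneg (C+1)]
  nlinarith [key, sq_nonneg (b*S)]

/-- The distance in ℂ between the ellipse `{cos(n(y + iδ)) : y ∈ ℝ}` and the real segment
`[-(cosh(nδ)+1)/2, (cosh(nδ)+1)/2]` is at least `(cosh(nδ) - 1)/2`. -/
theorem cos_ellipse_dist_to_segment
    (n : ℕ) (hn : 1 ≤ n) (δ : ℝ) (hδ : 0 < δ) (y s : ℝ)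
    (hs : |s| ≤ (Real.cosh (n * δ) + 1) / 2) :
    (Real.cosh (n * δ) - 1) / 2
      ≤ ‖Complex.cos ((n : ℂ) * ((y : ℂ) + Complex.I * (δ : ℂ))) - (s : ℂ)‖ := by
  have hz : (n : ℂ) * ((y : ℂ) + Complex.I * (δ : ℂ))
      = ((n * y : ℝ) : ℂ) + ((n * δ : ℝ) : ℂ) * Complex.I := by
    push_cast; ring
  rw [hz, Complex.cos_add_mul_I]
  set a := Real.cos (n * y)
  set b := Real.sin (n * y)
  set C := Real.cosh (n * δ)
  set S := Real.sinh (n * δ)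
  have hw : Complex.cos ((n * y : ℝ) : ℂ) * Complex.cosh ((n * δ : ℝ) : ℂ)
      - Complex.sin ((n * y : ℝ) : ℂ) * Complex.sinh ((n * δ : ℝ) : ℂ) * Complex.I - (s : ℂ)
      = Complex.mk (a * C - s) (-(b * S)) := by
    rw [← Complex.ofReal_cos, ← Complex.ofReal_sin, ← Complex.ofReal_cosh, ← Complex.ofReal_sinh]
    rw [Complex.mk_eq_add_mul_I]
    simp only [Complex.ofReal_mul, Complex.ofReal_neg, Complex.ofReal_sub]
    ring
  rw [hw]
  have hC : 1 ≤ C := Real.one_le_cosh _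
  have hnonneg : 0 ≤ (C - 1) / 2 := by linarith
  have hsq : ((C - 1)/2)^2 ≤ (a * C - s)^2 + (-(b*S))^2 := by
    have := cos_ellipse_alg a b s C S (Real.cos_sq_add_sin_sq (n*y)) (Real.cosh_sq_sub_sinh_sq (n*δ)) hC (by nlinarith [sq_abs s, abs_nonneg s])
    nlinarith [this]
  have habs : ‖Complex.mk (a * C - s) (-(b * S))‖
      = Real.sqrt ((a * C - s)^2 + (-(b*S))^2) := by
    rw [Complex.norm_def, Complex.normSq_mk]; ring_nf
  rw [habs]
  calc (C - 1)/2 = Real.sqrt (((C-1)/2)^2) := (Real.sqrt_sq hnonneg).symm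
    _ ≤ _ := Real.sqrt_le_sqrt hsq
end
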